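/- In a JSBAF without preferences satisfying the Deductive ASPIC⊖ constructibility conditions, the grounded labeling exists and is unique: there is exactly one ground-complete labeling L such that no ground-complete labeling L′ has in(L′) ⊊ in(L); moreover the result of every grounded construction equals this labeling. -/

import Mathlib

namespace G

inductive Lab : Type
  | IN | OUT | UNDEC
deriving DecidableEq

/-- A JSBAF without preferences. -/
structure JSB (A : Type) where
  att : A → A → Prop
  supp : Set A → A → Prop

variable {A : Type}

/-- Strict arguments. -/
inductive Strict (J : JSB A) : A → Prop
  | mk (S : Set A) (a : A) (h : J.supp S a) (hS : ∀ b ∈ S, Strict J b) : Strict J a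

/-- One support step: a is in a supporting set of b. -/
def sstep (J : JSB A) (a b : A) : Prop := ∃ S, J.supp S b ∧ a ∈ S

/-- Support path of length ≥ 1. -/
def SPath (J : JSB A) : A → A → Prop := Relation.TransGen (sstep J)

/-- Support children of an argument. -/
def SC (J : JSB A) (B : A) : Set A := {c | SPath J B c}

/-- Constructibility according to Deductive ASPIC⊖ (Definition of 𝔍_{DA⊖}). -/
structure Constructible (J : JSB A) : Prop where
  acyc : ∀ a, ¬ SPath J a a
  uniqSupp : ∀ S S' b, J.supp S b → J.supp S' b → S = S'
  finSupp : ∀ S b, J.supp S b → S.Finite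
  strictUnatt : ∀ a b, Strict J b → ¬ J.att a b

def inL (L : A → Lab) : Set A := {a | L a = Lab.IN}
def outL (L : A → Lab) : Set A := {a | L a = Lab.OUT}

/-- The multiset of labels (under L) of the members of S is ≤ the label l
(Definition of the label ordering): anything ≤ IN; ≤ UNDEC iff S contains an UNDEC or OUT
member; ≤ OUT iff S contains an OUT member or at least two UNDEC members. -/
def mLe (L : A → Lab) (S : Set A) (l : Lab) : Prop :=
  l = Lab.IN ∨
  (l = Lab.UNDEC ∧ ∃ b ∈ S, L b = Lab.UNDEC ∨ L b = Lab.OUT) ∨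
  (l = Lab.OUT ∧ ((∃ b ∈ S, L b = Lab.OUT) ∨
    (∃ b₁ ∈ S, ∃ b₂ ∈ S, b₁ ≠ b₂ ∧ L b₁ = Lab.UNDEC ∧ L b₂ = Lab.UNDEC)))

/-- Legally IN: all attackers OUT, and for every support (S,c) with a ∈ S the multiset of
labels of S ∖ {a} is ≤ the label of c. -/
def legallyIn (J : JSB A) (L : A → Lab) (a : A) : Prop :=
  (∀ b, J.att b a → L b = Lab.OUT) ∧
  ∀ S c, J.supp S c → a ∈ S → mLe L (S \ {a}) (L c)

/-- Legally OUT: an IN attacker, or a support chain starting at a whose heads are all OUT,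
whose last head is attacked by an IN argument, and each of whose supporting sets has exactly
one non-IN member. -/
def legallyOut (J : JSB A) (L : A → Lab) (a : A) : Prop :=
  (∃ b, J.att b a ∧ L b = Lab.IN) ∨
  ∃ (n : ℕ) (S : ℕ → Set A) (b : ℕ → A),
    (∀ i ≤ n, J.supp (S i) (b i)) ∧
    (∀ i < n, b i ∈ S (i + 1)) ∧
    a ∈ S 0 ∧
    (∃ c, J.att c (b n) ∧ L c = Lab.IN) ∧
    (∀ i ≤ n, L (b i) = Lab.OUT) ∧
    (∀ d ∈ S 0, d ≠ a → L d = Lab.IN) ∧ L a ≠ Lab.IN ∧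
    (∀ i, 1 ≤ i → i ≤ n → ∀ d ∈ S i, d ≠ b (i - 1) → L d = Lab.IN)

/-- Admissible labeling: IN arguments are legally IN, OUT exactly the legally OUT, strict
arguments IN. -/
def Admissible (J : JSB A) (L : A → Lab) : Prop :=
  (∀ a, L a = Lab.IN → legallyIn J L a) ∧
  (∀ a, L a = Lab.OUT ↔ legallyOut J L a) ∧
  (∀ a, Strict J a → L a = Lab.IN)

/-- The OUT-closure of a set I of accepted arguments: arguments attacked by I, closed under
supports whose head is rejected and whose other members are all in I. -/
inductive OutCl (J : JSB A) (I : Set A) : A → Prop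
  | att (a b : A) (hb : b ∈ I) (h : J.att b a) : OutCl J I a
  | supp (a : A) (S : Set A) (c : A) (h : J.supp S c) (ha : a ∈ S)
      (hc : OutCl J I c) (hS : ∀ d ∈ S, d ≠ a → d ∈ I) : OutCl J I a

open Classical in
/-- The strict-including-minimal labeling. -/
noncomputable def SIM (J : JSB A) : A → Lab := fun a =>
  if Strict J a then Lab.IN
  else if OutCl J {x | Strict J x} a then Lab.OUT
  else Lab.UNDEC

/-- The 'more informative' relation on labels. -/
def geqp (l' l : Lab) : Prop := l = Lab.UNDEC ∨ l' = l

/-- L' extends L: IN- and OUT-sets are preserved. -/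
def Extends (L L' : A → Lab) : Prop := inL L ⊆ inL L' ∧ outL L ⊆ outL L'

/-- (S,B) is a safe support for X in L: X ∈ S, and on every support chain starting with
(S,B) all heads are attacked only by OUT-labeled arguments. -/
def Safe (J : JSB A) (L : A → Lab) (S : Set A) (B X : A) : Prop :=
  X ∈ S ∧ J.supp S B ∧
  ∀ c, (c = B ∨ SPath J B c) → ∀ D, J.att D c → L D = Lab.OUT

/-- X is forced IN w.r.t. L. -/
def ForcedIn (J : JSB A) (L : A → Lab) (X : A) : Prop :=
  (∀ b, J.att b X → L b = Lab.OUT) ∧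
  ∀ S B, J.supp S B → X ∈ S → L B ≠ Lab.IN →
    (Safe J L S B X ∨
     ∀ L' : A → Lab, Admissible J L' → geqp (L' B) (L B) →
       ∃ L'' : A → Lab, Admissible J L'' ∧ Extends L' L'' ∧
         legallyIn J L'' X ∧ L'' B = L' B)

/-- Ground-complete labelings: admissible and accepting every forced-IN argument. -/
def GroundComplete (J : JSB A) (L : A → Lab) : Prop :=
  Admissible J L ∧ ∀ X, ForcedIn J L X → L X = Lab.IN

/-- A grounded construction: a transfinite sequence of labelings starting at SIM, at each
successor step accepting one forced-IN argument together with the heads and support children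
of its safe supports and recomputing the OUT-closure, taking unions at limit stages, and
terminating when every forced-IN argument is already IN. -/
structure GConstr (J : JSB A) (α : Ordinal) (f : Ordinal → (A → Lab)) : Prop where
  init : f 0 = SIM J
  succ : ∀ β < α, ∃ X : A,
    ForcedIn J (f β) X ∧ f β X ≠ Lab.IN ∧
    inL (f (β + 1)) =
      inL (f β) ∪ {X} ∪
        {c | ∃ S B, Safe J (f β) S B X ∧ (c = B ∨ c ∈ SC J B)} ∧
    outL (f (β + 1)) = {a | OutCl J (inL (f (β + 1))) a}
  limit : ∀ δ ≤ α, Order.IsSuccLimit δ →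
    inL (f δ) = {a | ∃ β < δ, a ∈ inL (f β)} ∧
    outL (f δ) = {a | ∃ β < δ, a ∈ outL (f β)}
  done : ∀ X, ForcedIn J (f α) X → f α X = Lab.IN


section AUX
variable {J : JSB A}

open Classical in
/-- Canonical labeling from a set of IN arguments. -/
noncomputable def Lam (J : JSB A) (I : Set A) : A → Lab := fun a =>
  if a ∈ I then Lab.IN
  else if OutCl J I a then Lab.OUT
  else Lab.UNDEC

theorem lam_in {I : Set A} {a : A} : Lam J I a = Lab.IN ↔ a ∈ I := by
  classical
  unfold Lam
  by_cases h : a ∈ I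
  · simp [h]
  · by_cases h2 : OutCl J I a <;> simp [h, h2]

theorem lam_out {I : Set A} {a : A} : Lam J I a = Lab.OUT ↔ (OutCl J I a ∧ a ∉ I) := by
  classical
  unfold Lam
  by_cases h : a ∈ I
  · simp [h]
  · by_cases h2 : OutCl J I a <;> simp [h, h2]

theorem lam_undec {I : Set A} {a : A} :
    Lam J I a = Lab.UNDEC ↔ (¬ OutCl J I a ∧ a ∉ I) := by
  classical
  unfold Lam
  by_cases h : a ∈ I
  · simp [h]
  · by_cases h2 : OutCl J I a <;> simp [h, h2]

theorem inL_lam {I : Set A} : inL (Lam J I) = I := by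
  ext a; exact lam_in

theorem outcl_mono {I I' : Set A} (hII : I ⊆ I') {a : A} (h : OutCl J I a) :
    OutCl J I' a := by
  induction h with
  | att a b hb h => exact OutCl.att a b (hII hb) h
  | supp a S c h ha _ hS ih => exact OutCl.supp a S c h ha ih (fun d hd hda => hII (hS d hd hda))

theorem strict_not_outcl (hc : Constructible J) {a : A} (hs : Strict J a) :
    ¬ OutCl J {x | Strict J x} a := by
  intro h
  revert hs
  induction h with
  | att a b hb h => exact fun hs => hc.strictUnatt b a hs h
  | supp a S c h ha hcout hS ih =>
    exact fun hs => ih (Strict.mk S c h (fun d hd => by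
      by_cases hda : d = a
      · exact hda ▸ hs
      · exact hS d hd hda))

theorem reach_not_outcl {I : Set A} {c : A}
    (hreach : ∀ y, (y = c ∨ SPath J c y) → ∀ d, J.att d y → Lam J I d = Lab.OUT) :
    ¬ OutCl J I c := by
  intro h
  revert hreach
  induction h with
  | att a b hb hatt =>
    intro hreach
    have := hreach a (Or.inl rfl) b hatt
    rw [lam_out] at this
    exact this.2 hb
  | supp a S c' hsupp ha hc' hS ih =>
    intro hreach
    refine ih (fun y hy d hd => hreach y ?_ d hd)
    have hstep : sstep J a c' := ⟨S, hsupp, ha⟩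
    rcases hy with rfl | hy
    · exact Or.inr (Relation.TransGen.single hstep)
    · exact Or.inr (Relation.TransGen.head hstep hy)

theorem mLe_all_in {M : A → Lab} {T : Set A} {l : Lab}
    (hT : ∀ d ∈ T, M d = Lab.IN) (h : mLe M T l) : l = Lab.IN := by
  rcases h with h | ⟨_, b, hb, hor⟩ | ⟨_, h⟩
  · exact h
  · rcases hor with h' | h' <;> simp [hT b hb] at h'
  · rcases h with ⟨b, hb, h'⟩ | ⟨b₁, hb₁, b₂, hb₂, _, h', _⟩
    · simp [hT b hb] at h'
    · simp [hT b₁ hb₁] at h'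

theorem prepend {M : A → Lab} {S : Set A} {c a : A}
    (hsupp : J.supp S c) (ha : a ∈ S) (hside : ∀ d ∈ S, d ≠ a → M d = Lab.IN)
    (hna : M a ≠ Lab.IN) (hcout : M c = Lab.OUT) (hlc : legallyOut J M c) :
    legallyOut J M a := by
  rcases hlc with ⟨e, he, hein⟩ | ⟨n, S0, b, h1, h2, h3, h4, h5, h6, h7, h8⟩
  · refine Or.inr ⟨0, fun _ => S, fun _ => c, fun _ _ => hsupp,
      fun i h => absurd h (Nat.not_lt_zero i), ha, ⟨e, he, hein⟩,
      fun _ _ => hcout, hside, hna, fun i h1 h0 => by omega⟩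
  · refine Or.inr ⟨n+1, fun i => if i = 0 then S else S0 (i-1),
      fun i => if i = 0 then c else b (i-1), ?_, ?_, ?_, ?_, ?_, ?_, hna, ?_⟩
    · intro i hi
      by_cases h0 : i = 0
      · simp [h0, hsupp]
      · simp only [if_neg h0]
        exact h1 (i-1) (by omega)
    · intro i hi
      by_cases h0 : i = 0
      · simpa [h0] using h3
      · simp only [if_neg h0, if_neg (Nat.succ_ne_zero i)]
        have := h2 (i-1) (by omega)
        have he : i - 1 + 1 = i := by omega
        rw [he] at this
        simpa using this
    · simpa using ha
    · simp only [if_neg (Nat.succ_ne_zero n)]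
      simpa using h4
    · intro i hi
      by_cases h0 : i = 0
      · simp [h0, hcout]
      · simp only [if_neg h0]
        exact h5 (i-1) (by omega)
    · simpa using hside
    · intro i hi1 hin d hd hdb
      simp only [if_neg (by omega : i ≠ 0)] at hd
      by_cases h1' : i = 1
      · subst h1'
        simp only at hd hdb
        exact h6 d hd (by simpa using hdb)
      · have hii : 1 ≤ i - 1 := by omega
        have hdb' : d ≠ b (i - 1 - 1) := by
          simpa only [if_neg (by omega : i - 1 ≠ 0)] using hdb
        exact h8 (i-1) hii (by omega) d hd hdb'

/-- The key invariant on IN-sets along a grounded construction. -/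
def Good (J : JSB A) (I : Set A) : Prop :=
  ({x | Strict J x} ⊆ I) ∧ (∀ a ∈ I, ¬ OutCl J I a) ∧
  (∀ a ∈ I, ∀ b, J.att b a → OutCl J I b) ∧
  (∀ S c, J.supp S c → S ⊆ I → c ∈ I)

theorem good_out_iff {I : Set A} (hg : Good J I) (a : A) :
    Lam J I a = Lab.OUT ↔ legallyOut J (Lam J I) a := by
  constructor
  · intro h
    obtain ⟨hout, -⟩ := lam_out.mp h
    clear h
    induction hout with
    | att a b hb hatt => exact Or.inl ⟨b, hatt, lam_in.mpr hb⟩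
    | supp a S c hsupp ha hcout hS ih =>
      have haO : OutCl J I a := OutCl.supp a S c hsupp ha hcout hS
      refine prepend hsupp ha (fun d hd hda => lam_in.mpr (hS d hd hda))
        (fun hin => hg.2.1 a (lam_in.mp hin) haO)
        (lam_out.mpr ⟨hcout, fun hcin => hg.2.1 c hcin hcout⟩) ih
  · intro h
    rcases h with ⟨b, hatt, hbin⟩ | ⟨n, S, b, h1, h2, h3, h4, h5, h6, h7, h8⟩
    · have hbI := lam_in.mp hbin
      refine lam_out.mpr ⟨OutCl.att a b hbI hatt, fun hain => ?_⟩
      exact hg.2.1 b hbI (hg.2.2.1 a hain b hatt)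
    · have hb0 : OutCl J I (b 0) := (lam_out.mp (h5 0 (Nat.zero_le n))).1
      refine lam_out.mpr ⟨OutCl.supp a (S 0) (b 0) (h1 0 (Nat.zero_le n)) h3 hb0
        (fun d hd hda => lam_in.mp (h6 d hd hda)), fun hain => h7 (lam_in.mpr hain)⟩

theorem good_legallyIn {I : Set A} (hg : Good J I) {a : A} (ha : a ∈ I) :
    legallyIn J (Lam J I) a := by
  classical
  constructor
  · intro b hatt
    exact lam_out.mpr ⟨hg.2.2.1 a ha b hatt,
      fun hbI => hg.2.1 b hbI (hg.2.2.1 a ha b hatt)⟩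
  · intro S c hsupp haS
    by_cases hcI : c ∈ I
    · exact Or.inl (lam_in.mpr hcI)
    by_cases hcO : OutCl J I c
    · refine Or.inr (Or.inr ⟨lam_out.mpr ⟨hcO, hcI⟩, ?_⟩)
      by_cases hsub : ∀ d₁, (d₁ ∈ S ∧ d₁ ∉ I) → ∀ d₂, (d₂ ∈ S ∧ d₂ ∉ I) → d₁ = d₂
      · by_cases hne : ∃ d, d ∈ S ∧ d ∉ I
        · obtain ⟨d, hd⟩ := hne
          have hEx : ∀ d' ∈ S, d' ≠ d → d' ∈ I := fun d' hd' hne' =>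
            by_contra (fun hni => hne' (hsub d' ⟨hd', hni⟩ d hd))
          have hdO : OutCl J I d := OutCl.supp d S c hsupp hd.1 hcO hEx
          refine Or.inl ⟨d, ⟨hd.1, ?_⟩, lam_out.mpr ⟨hdO, hd.2⟩⟩
          simp only [Set.mem_singleton_iff]
          intro h; exact hd.2 (h ▸ ha)
        · push_neg at hne
          have : S ⊆ I := fun d hd => hne d hd
          exact absurd (hg.2.2.2 S c hsupp this) hcI
      · push_neg at hsub
        obtain ⟨d₁, hd₁, d₂, hd₂, hne12⟩ := hsub
        have hm₁ : d₁ ∈ S \ {a} := ⟨hd₁.1, by simp; intro h; exact hd₁.2 (h ▸ ha)⟩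
        have hm₂ : d₂ ∈ S \ {a} := ⟨hd₂.1, by simp; intro h; exact hd₂.2 (h ▸ ha)⟩
        by_cases h₁O : OutCl J I d₁
        · exact Or.inl ⟨d₁, hm₁, lam_out.mpr ⟨h₁O, hd₁.2⟩⟩
        by_cases h₂O : OutCl J I d₂
        · exact Or.inl ⟨d₂, hm₂, lam_out.mpr ⟨h₂O, hd₂.2⟩⟩
        · exact Or.inr ⟨d₁, hm₁, d₂, hm₂, hne12,
            lam_undec.mpr ⟨h₁O, hd₁.2⟩, lam_undec.mpr ⟨h₂O, hd₂.2⟩⟩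
    · -- c is UNDEC
      refine Or.inr (Or.inl ⟨lam_undec.mpr ⟨hcO, hcI⟩, ?_⟩)
      by_cases hall : ∀ d ∈ S, d ≠ a → d ∈ I
      · have hS : S ⊆ I := fun d hd => by
          by_cases hda : d = a
          · exact hda ▸ ha
          · exact hall d hd hda
        exact absurd (hg.2.2.2 S c hsupp hS) hcI
      · push_neg at hall
        obtain ⟨d, hd, hda, hdI⟩ := hall
        refine ⟨d, ⟨hd, by simpa using hda⟩, ?_⟩
        by_cases hdO : OutCl J I d
        · exact Or.inr (lam_out.mpr ⟨hdO, hdI⟩)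
        · exact Or.inl (lam_undec.mpr ⟨hdO, hdI⟩)

theorem good_admissible {I : Set A} (hg : Good J I) : Admissible J (Lam J I) :=
  ⟨fun a h => good_legallyIn hg (lam_in.mp h), good_out_iff hg,
   fun a hs => lam_in.mpr (hg.1 hs)⟩

theorem outcl_sub_out {M : A → Lab} {I : Set A} (hM : Admissible J M)
    (hI : I ⊆ inL M) {a : A} (h : OutCl J I a) : M a = Lab.OUT := by
  induction h with
  | att a b hb hatt => exact (hM.2.1 a).mpr (Or.inl ⟨b, hatt, hI hb⟩)
  | supp a S c hsupp ha hcout hS ih =>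
    have hside : ∀ d ∈ S, d ≠ a → M d = Lab.IN := fun d hd hda => hI (hS d hd hda)
    have hna : M a ≠ Lab.IN := by
      intro hain
      have hml := (hM.1 a hain).2 S c hsupp ha
      have := mLe_all_in (fun d hd => hside d hd.1 (by simpa using hd.2)) hml
      rw [ih] at this
      exact Lab.noConfusion this
    exact (hM.2.1 a).mpr (prepend hsupp ha hside hna ih ((hM.2.1 c).mp ih))

theorem legallyOut_outcl {M : A → Lab} {a : A} (h : legallyOut J M a) :
    OutCl J (inL M) a := by
  rcases h with ⟨b, hatt, hbin⟩ | ⟨n, S, b, h1, h2, h3, h4, h5, h6, h7, h8⟩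
  · exact OutCl.att a b hbin hatt
  · have key : ∀ j, j ≤ n → OutCl J (inL M) (b (n - j)) := by
      intro j
      induction j with
      | zero =>
        intro _
        obtain ⟨c, hc, hcin⟩ := h4
        exact OutCl.att (b n) c hcin hc
      | succ j ihj =>
        intro hj
        have hmem : b (n - (j+1)) ∈ S (n - (j+1) + 1) := h2 _ (by omega)
        have heq : n - (j+1) + 1 = n - j := by omega
        rw [heq] at hmem
        refine OutCl.supp _ (S (n - j)) (b (n - j)) (h1 (n-j) (by omega)) hmem
          (ihj (by omega)) ?_
        intro d hd hda
        have hda' : d ≠ b (n - j - 1) := by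
          have : n - j - 1 = n - (j+1) := by omega
          rw [this]; exact hda
        exact h8 (n-j) (by omega) (by omega) d hd hda'
    have hb0 : OutCl J (inL M) (b 0) := by
      have := key n le_rfl
      rwa [Nat.sub_self] at this
    exact OutCl.supp a (S 0) (b 0) (h1 0 (Nat.zero_le n)) h3 hb0
      (fun d hd hda => h6 d hd hda)

theorem adm_out_eq {M : A → Lab} (hM : Admissible J M) :
    outL M = {a | OutCl J (inL M) a} := by
  ext a
  constructor
  · intro h
    exact legallyOut_outcl ((hM.2.1 a).mp h)
  · intro h
    exact outcl_sub_out hM (fun x hx => hx) h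

theorem adm_eq_lam {M : A → Lab} (hM : Admissible J M) : M = Lam J (inL M) := by
  funext a
  have hout := adm_out_eq hM
  cases h : M a with
  | IN => exact ((lam_in (J:=J) (I:=inL M)).mpr h).symm
  | OUT =>
    refine (lam_out.mpr ⟨?_, ?_⟩).symm
    · have : a ∈ outL M := h
      rwa [hout] at this
    · intro hin
      rw [(show (a ∈ inL M) from hin : M a = Lab.IN)] at h
      exact Lab.noConfusion h
  | UNDEC =>
    refine (lam_undec.mpr ⟨?_, ?_⟩).symm
    · intro hO
      have : a ∈ outL M := by rw [hout]; exact hO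
      rw [(show M a = Lab.OUT from this)] at h
      exact Lab.noConfusion h
    · intro hin
      rw [(show (a ∈ inL M) from hin : M a = Lab.IN)] at h
      exact Lab.noConfusion h

theorem adm_ext {M N : A → Lab} (hM : Admissible J M) (hN : Admissible J N)
    (h : inL M = inL N) : M = N := by
  rw [adm_eq_lam hM, adm_eq_lam hN, h]

/-- The set of heads and support-children of safe supports of X. -/
def Dset (J : JSB A) (L : A → Lab) (X : A) : Set A :=
  {c | ∃ S B, Safe J L S B X ∧ (c = B ∨ c ∈ SC J B)}

theorem forced_not_outcl {I : Set A} {X : A} (hg : Good J I)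
    (hF : ForcedIn J (Lam J I) X) : ¬ OutCl J I X := by
  intro h
  cases h with
  | att _ b hb hatt =>
    have := hF.1 b hatt
    rw [lam_out] at this
    exact this.2 hb
  | supp _ S c hsupp hX hc hS =>
    have hcI : c ∉ I := fun h => hg.2.1 c h hc
    have hcne : Lam J I c ≠ Lab.IN := fun h => hcI (lam_in.mp h)
    rcases hF.2 S c hsupp hX hcne with hsafe | hQ
    · exact reach_not_outcl hsafe.2.2 hc
    · obtain ⟨L'', hadm'', hext'', hlin'', hB''⟩ :=
        hQ (Lam J I) (good_admissible hg) (Or.inr rfl)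
      have hml := hlin''.2 S c hsupp hX
      have hall : ∀ d ∈ S \ {X}, L'' d = Lab.IN := by
        intro d hd
        have hdI : d ∈ I := hS d hd.1 (by simpa using hd.2)
        exact hext''.1 (lam_in.mpr hdI)
      have hin := mLe_all_in hall hml
      exact hcne (hB''.symm.trans hin)

theorem dset_not_outcl {I : Set A} {X d : A} (hd : d ∈ Dset J (Lam J I) X) :
    ¬ OutCl J I d := by
  obtain ⟨S, B, hsafe, hdB⟩ := hd
  refine reach_not_outcl (fun y hy e he => hsafe.2.2 y ?_ e he)
  rcases hdB with rfl | hdB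
  · exact hy
  · rcases hy with rfl | hy
    · exact Or.inr hdB
    · exact Or.inr (Relation.TransGen.trans hdB hy)

theorem good_step {I : Set A} {X : A} (hg : Good J I)
    (hF : ForcedIn J (Lam J I) X) (hXI : X ∉ I) :
    Good J (I ∪ {X} ∪ Dset J (Lam J I) X) := by
  classical
  set L := Lam J I with hL
  set D := Dset J L X with hD
  set I' := I ∪ {X} ∪ D with hI'
  have hII' : I ⊆ I' := fun a ha => Or.inl (Or.inl ha)
  have hXO : ¬ OutCl J I X := forced_not_outcl hg hF
  have hF' : ∀ S c, J.supp S c → S ⊆ I' → c ∈ I' := by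
    intro S c hsupp hS
    by_cases hDex : ∃ d ∈ S, d ∈ D
    · obtain ⟨d, hdS, hdD⟩ := hDex
      obtain ⟨S₀, B, hsafe, hdB⟩ := hdD
      have hstep : sstep J d c := ⟨S, hsupp, hdS⟩
      refine Or.inr ⟨S₀, B, hsafe, Or.inr ?_⟩
      rcases hdB with rfl | hdB
      · exact Relation.TransGen.single hstep
      · exact Relation.TransGen.tail hdB hstep
    · push_neg at hDex
      by_cases hX : X ∈ S
      · have hSI : ∀ d ∈ S, d ≠ X → d ∈ I := by
          intro d hd hdX
          rcases hS hd with (h | h) | h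
          · exact h
          · exact absurd h hdX
          · exact absurd h (hDex d hd)
        by_cases hcI : c ∈ I
        · exact hII' hcI
        have hcne : L c ≠ Lab.IN := fun h => hcI (lam_in.mp h)
        rcases hF.2 S c hsupp hX hcne with hsafe | hQ
        · exact Or.inr ⟨S, c, hsafe, Or.inl rfl⟩
        · exfalso
          obtain ⟨L'', hadm'', hext'', hlin'', hB''⟩ :=
            hQ L (good_admissible hg) (Or.inr rfl)
          have hml := hlin''.2 S c hsupp hX
          have hall : ∀ d ∈ S \ {X}, L'' d = Lab.IN := fun d hd =>
            hext''.1 (lam_in.mpr (hSI d hd.1 (by simpa using hd.2)))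
          exact hcne (hB''.symm.trans (mLe_all_in hall hml))
      · have hSI : S ⊆ I := by
          intro d hd
          rcases hS hd with (h | h) | h
          · exact h
          · exact absurd (h ▸ hd) hX
          · exact absurd h (hDex d hd)
        exact hII' (hg.2.2.2 S c hsupp hSI)
  have hI'O : ∀ b ∈ I', ¬ OutCl J I b := by
    intro b hb hbO
    rcases hb with (h | h) | h
    · exact hg.2.1 b h hbO
    · exact hXO (h ▸ hbO)
    · exact dset_not_outcl h hbO
  have hattO : ∀ a ∈ I', ∀ b, J.att b a → OutCl J I b := by
    intro a ha b hatt
    rcases ha with (h | h) | h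
    · exact hg.2.2.1 a h b hatt
    · have := hF.1 b (h ▸ hatt)
      exact (lam_out.mp this).1
    · obtain ⟨S₀, B, hsafe, hdB⟩ := h
      exact (lam_out.mp (hsafe.2.2 a hdB b hatt)).1
  have hA' : ∀ a ∈ I', ¬ OutCl J I' a := by
    intro a haI' haO
    revert haI'
    induction haO with
    | att a b hb hatt =>
      intro haI'
      exact hI'O b hb (hattO a haI' b hatt)
    | supp a S c hsupp ha hcout hS ih =>
      intro haI'
      refine ih (hF' S c hsupp (fun d hd => ?_))
      by_cases hda : d = a
      · exact hda ▸ haI'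
      · exact hS d hd hda
  exact ⟨fun x hx => hII' (hg.1 hx), hA',
    fun a ha b hatt => outcl_mono hII' (hattO a ha b hatt), hF'⟩

theorem forced_mono {I : Set A} {X : A} {M : A → Lab} (hg : Good J I)
    (hM : Admissible J M) (hIM : I ⊆ inL M)
    (hF : ForcedIn J (Lam J I) X) : ForcedIn J M X := by
  have hOO : ∀ b, Lam J I b = Lab.OUT → M b = Lab.OUT := fun b hb =>
    outcl_sub_out hM hIM (lam_out.mp hb).1
  constructor
  · exact fun b h => hOO b (hF.1 b h)
  · intro S B hsupp hX hBne
    have hBI : B ∉ I := fun h => hBne (hIM h)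
    have hLBne : Lam J I B ≠ Lab.IN := fun h => hBI (lam_in.mp h)
    rcases hF.2 S B hsupp hX hLBne with hsafe | hQ
    · exact Or.inl ⟨hsafe.1, hsafe.2.1, fun y hy d hd => hOO d (hsafe.2.2 y hy d hd)⟩
    · right
      intro L' hadm' hge'
      apply hQ L' hadm'
      by_cases hBO : OutCl J I B
      · have hMB : M B = Lab.OUT := outcl_sub_out hM hIM hBO
        have hL'B : L' B = Lab.OUT := by
          rcases hge' with h | h
          · rw [hMB] at h; exact absurd h (by simp)
          · exact h.trans hMB
        rw [hL'B, lam_out.mpr ⟨hBO, hBI⟩]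
        exact Or.inr rfl
      · exact Or.inl (lam_undec.mpr ⟨hBO, hBI⟩)

theorem step_subset_gc {I : Set A} {X : A} {M : A → Lab} (hg : Good J I)
    (hF : ForcedIn J (Lam J I) X)
    (hM : GroundComplete J M) (hIM : I ⊆ inL M) :
    (I ∪ {X} ∪ Dset J (Lam J I) X) ⊆ inL M := by
  have hOO : ∀ b, Lam J I b = Lab.OUT → M b = Lab.OUT := fun b hb =>
    outcl_sub_out hM.1 hIM (lam_out.mp hb).1
  intro a ha
  rcases ha with (h | h) | h
  · exact hIM h
  · have : M X = Lab.IN := hM.2 X (forced_mono hg hM.1 hIM hF)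
    exact h ▸ this
  · obtain ⟨S₀, B, hsafe, hdB⟩ := h
    have hreach : ∀ y, (y = B ∨ SPath J B y) → ∀ d, J.att d y → M d = Lab.OUT :=
      fun y hy d hd => hOO d (hsafe.2.2 y hy d hd)
    refine hM.2 a ⟨fun b hatt => hreach a hdB b hatt, ?_⟩
    intro S₂ C hsupp₂ haS₂ hCne
    left
    refine ⟨haS₂, hsupp₂, fun y hy d hd => ?_⟩
    have hstep : sstep J a C := ⟨S₂, hsupp₂, haS₂⟩
    have hBC : SPath J B C := by
      rcases hdB with rfl | hdB
      · exact Relation.TransGen.single hstep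
      · exact Relation.TransGen.tail hdB hstep
    have hBy : SPath J B y := by
      rcases hy with rfl | hy
      · exact hBC
      · exact Relation.TransGen.trans hBC hy
    exact hreach y (Or.inr hBy) d hd

theorem good_zero (hc : Constructible J) : Good J {x | Strict J x} := by
  refine ⟨fun x hx => hx, fun a ha => strict_not_outcl hc ha, ?_, ?_⟩
  · intro a ha b hatt
    exact absurd hatt (hc.strictUnatt b a ha)
  · intro S c hsupp hS
    exact Strict.mk S c hsupp (fun b hb => hS hb)

theorem outcl_limit {F : Ordinal → Set A} {δ : Ordinal} (hδ : 0 < δ)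
    (hfin : ∀ S b, J.supp S b → S.Finite)
    (hmono : ∀ β γ, β ≤ γ → γ < δ → F β ⊆ F γ) {a : A} :
    OutCl J {x | ∃ β < δ, x ∈ F β} a ↔ ∃ β < δ, OutCl J (F β) a := by
  classical
  constructor
  · intro h
    induction h with
    | att a b hb hatt =>
      obtain ⟨β, hβ, hbF⟩ := hb
      exact ⟨β, hβ, OutCl.att a b hbF hatt⟩
    | supp a S c hsupp ha hcout hS ih =>
      obtain ⟨β₀, hβ₀, hc₀⟩ := ih
      set φ : A → Ordinal := fun d =>
        if h : ∃ β < δ, d ∈ F β then Classical.choose h else 0 with hφ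
      have hφlt : ∀ d, φ d < δ := by
        intro d
        by_cases h : ∃ β < δ, d ∈ F β
        · have he : φ d = Classical.choose h := dif_pos h
          rw [he]; exact (Classical.choose_spec h).1
        · have he : φ d = 0 := dif_neg h
          rw [he]; exact hδ
      have hφmem : ∀ d, (h : ∃ β < δ, d ∈ F β) → d ∈ F (φ d) := by
        intro d h
        have he : φ d = Classical.choose h := dif_pos h
        rw [he]; exact (Classical.choose_spec h).2
      set T := (hfin S c hsupp).toFinset with hT
      set γ := max (T.sup φ) β₀ with hγdef
      have hγ : γ < δ :=
        max_lt ((Finset.sup_lt_iff hδ).mpr (fun d _ => hφlt d)) hβ₀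
      refine ⟨γ, hγ, OutCl.supp a S c hsupp ha
        (outcl_mono (hmono β₀ γ (le_max_right _ _) hγ) hc₀) ?_⟩
      intro d hd hda
      have hmem : d ∈ F (φ d) := hφmem d (hS d hd hda)
      have hle : φ d ≤ γ := by
        refine le_trans (Finset.le_sup ?_) (le_max_left _ _)
        rw [hT, Set.Finite.mem_toFinset]
        exact hd
      exact hmono (φ d) γ hle hγ hmem
  · rintro ⟨β, hβ, h⟩
    exact outcl_mono (show F β ⊆ {x | ∃ β < δ, x ∈ F β} from fun x hx => ⟨β, hβ, hx⟩) h

theorem good_limit {F : Ordinal → Set A} {δ : Ordinal} (hδ : 0 < δ)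
    (hfin : ∀ S b, J.supp S b → S.Finite)
    (hmono : ∀ β γ, β ≤ γ → γ < δ → F β ⊆ F γ)
    (hgood : ∀ β < δ, Good J (F β)) :
    Good J {x | ∃ β < δ, x ∈ F β} := by
  classical
  set U := {x | ∃ β < δ, x ∈ F β} with hU
  have hsub : ∀ β, β < δ → F β ⊆ U := fun β hβ x hx => ⟨β, hβ, hx⟩
  refine ⟨fun x hx => ⟨0, hδ, (hgood 0 hδ).1 hx⟩, ?_, ?_, ?_⟩
  · intro a ha hO
    obtain ⟨β₁, hβ₁, ha₁⟩ := ha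
    obtain ⟨β₂, hβ₂, hO₂⟩ := (outcl_limit hδ hfin hmono).mp hO
    have hγ : max β₁ β₂ < δ := max_lt hβ₁ hβ₂
    exact (hgood _ hγ).2.1 a (hmono β₁ _ (le_max_left _ _) hγ ha₁)
      (outcl_mono (hmono β₂ _ (le_max_right _ _) hγ) hO₂)
  · intro a ha b hatt
    obtain ⟨β, hβ, haF⟩ := ha
    exact outcl_mono (hsub β hβ) ((hgood β hβ).2.2.1 a haF b hatt)
  · intro S c hsupp hS
    set φ : A → Ordinal := fun d =>
      if h : ∃ β < δ, d ∈ F β then Classical.choose h else 0 with hφ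
    have hφlt : ∀ d, φ d < δ := by
      intro d
      by_cases h : ∃ β < δ, d ∈ F β
      · have he : φ d = Classical.choose h := dif_pos h
        rw [he]; exact (Classical.choose_spec h).1
      · have he : φ d = 0 := dif_neg h
        rw [he]; exact hδ
    have hφmem : ∀ d, (h : ∃ β < δ, d ∈ F β) → d ∈ F (φ d) := by
      intro d h
      have he : φ d = Classical.choose h := dif_pos h
      rw [he]; exact (Classical.choose_spec h).2
    set T := (hfin S c hsupp).toFinset with hT
    set γ := T.sup φ with hγdef
    have hγ : γ < δ := (Finset.sup_lt_iff hδ).mpr (fun d _ => hφlt d)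
    have hSF : S ⊆ F γ := by
      intro d hd
      have hle : φ d ≤ γ := Finset.le_sup (by rw [hT, Set.Finite.mem_toFinset]; exact hd)
      exact hmono (φ d) γ hle hγ (hφmem d (hS hd))
    exact hsub γ hγ ((hgood γ hγ).2.2.2 S c hsupp hSF)

theorem eq_lam_of {M : A → Lab} (h : outL M = {a | OutCl J (inL M) a}) :
    M = Lam J (inL M) := by
  funext a
  cases hM : M a with
  | IN => exact ((lam_in (J:=J) (I:=inL M)).mpr hM).symm
  | OUT =>
    refine (lam_out.mpr ⟨?_, ?_⟩).symm
    · have : a ∈ outL M := hM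
      rwa [h] at this
    · intro hin
      rw [(show (a ∈ inL M) from hin : M a = Lab.IN)] at hM
      exact Lab.noConfusion hM
  | UNDEC =>
    refine (lam_undec.mpr ⟨?_, ?_⟩).symm
    · intro hO
      have : a ∈ outL M := by rw [h]; exact hO
      rw [(show M a = Lab.OUT from this)] at hM
      exact Lab.noConfusion hM
    · intro hin
      rw [(show (a ∈ inL M) from hin : M a = Lab.IN)] at hM
      exact Lab.noConfusion hM

theorem SIM_eq_lam : SIM J = Lam J {x | Strict J x} := by
  classical
  funext a
  by_cases h : Strict J a
  · simp [SIM, Lam, h, Set.mem_setOf_eq]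
  · by_cases h2 : OutCl J {x | Strict J x} a <;>
      simp [SIM, Lam, h, h2, Set.mem_setOf_eq]

theorem gconstr_mono {α : Ordinal} {f : Ordinal → (A → Lab)} (hg : GConstr J α f) :
    ∀ β ≤ α, ∀ γ ≤ β, inL (f γ) ⊆ inL (f β) := by
  intro β
  induction β using Ordinal.induction with
  | _ β IH =>
  intro hβα γ hγβ
  rcases eq_or_lt_of_le hγβ with rfl | hγ
  · exact subset_rfl
  rcases Ordinal.zero_or_succ_or_isSuccLimit β with h0 | ⟨σ, hσ⟩ | hlim
  · subst h0; exact absurd hγ (not_lt_of_ge (zero_le (a := γ)))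
  · subst hσ
    have hσβ : σ < Order.succ σ := Order.lt_succ σ
    have hσα : σ < α := lt_of_lt_of_le hσβ hβα
    obtain ⟨X, hF, hne, hin, hout⟩ := hg.succ σ hσα
    have hsub : inL (f σ) ⊆ inL (f (Order.succ σ)) := by
      rw [← Ordinal.add_one_eq_succ, hin]
      exact fun x hx => Or.inl (Or.inl hx)
    exact (IH σ hσβ (le_of_lt hσα) γ (Order.lt_succ_iff.mp hγ)).trans hsub
  · obtain ⟨hinl, -⟩ := hg.limit β hβα hlim
    intro x hx
    rw [hinl]
    exact ⟨γ, hγ, hx⟩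

theorem gconstr_inv (hc : Constructible J) {α : Ordinal} {f : Ordinal → (A → Lab)}
    (hg : GConstr J α f) :
    ∀ β ≤ α, (outL (f β) = {a | OutCl J (inL (f β)) a}) ∧ Good J (inL (f β)) ∧
      (∀ M, GroundComplete J M → inL (f β) ⊆ inL M) := by
  intro β
  induction β using Ordinal.induction with
  | _ β IH =>
  intro hβα
  rcases Ordinal.zero_or_succ_or_isSuccLimit β with h0 | ⟨σ, hσ⟩ | hlim
  · subst h0
    rw [hg.init]
    have hinS : inL (SIM J) = {x | Strict J x} := by rw [SIM_eq_lam, inL_lam]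
    refine ⟨?_, ?_, ?_⟩
    · rw [hinS]
      ext a
      constructor
      · intro ha
        rw [SIM_eq_lam] at ha
        exact (lam_out.mp ha).1
      · intro hO
        rw [SIM_eq_lam]
        exact lam_out.mpr ⟨hO, fun hs => strict_not_outcl hc hs hO⟩
    · rw [hinS]; exact good_zero hc
    · intro M hM; rw [hinS]; exact fun x hx => hM.1.2.2 x hx
  · subst hσ
    have hσα : σ < α := lt_of_lt_of_le (Order.lt_succ σ) hβα
    obtain ⟨X, hF, hne, hin, hout⟩ := hg.succ σ hσα
    obtain ⟨hO, hGood, hC⟩ := IH σ (Order.lt_succ σ) (le_of_lt hσα)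
    have hfσ : f σ = Lam J (inL (f σ)) := eq_lam_of hO
    have hFX : ForcedIn J (Lam J (inL (f σ))) X := hfσ ▸ hF
    have hXI : X ∉ inL (f σ) := hne
    have hDeq : {c | ∃ S B, Safe J (f σ) S B X ∧ (c = B ∨ c ∈ SC J B)} =
        Dset J (Lam J (inL (f σ))) X := by rw [← hfσ]; rfl
    rw [← Ordinal.add_one_eq_succ]
    have hin' : inL (f (σ+1)) = inL (f σ) ∪ {X} ∪ Dset J (Lam J (inL (f σ))) X := by
      rw [hin, hDeq]
    refine ⟨hout, ?_, ?_⟩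
    · rw [hin']; exact good_step hGood hFX hXI
    · intro M hM; rw [hin']; exact step_subset_gc hGood hFX hM (hC M hM)
  · obtain ⟨hinl, houtl⟩ := hg.limit β hβα hlim
    have hδ0 : (0 : Ordinal) < β := hlim.pos
    have hmono' : ∀ γ γ', γ ≤ γ' → γ' < β → inL (f γ) ⊆ inL (f γ') := by
      intro γ γ' h1 h2
      exact gconstr_mono hg γ' (le_of_lt (lt_of_lt_of_le h2 hβα)) γ h1
    have houteq : outL (f β) = {a | OutCl J (inL (f β)) a} := by
      rw [houtl, hinl]
      ext a
      constructor
      · rintro ⟨γ, hγ, hout'⟩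
        rw [(IH γ hγ (le_of_lt (lt_of_lt_of_le hγ hβα))).1] at hout'
        exact (outcl_limit hδ0 hc.finSupp hmono').mpr ⟨γ, hγ, hout'⟩
      · intro h
        obtain ⟨γ, hγ, hOg⟩ := (outcl_limit hδ0 hc.finSupp hmono').mp h
        refine ⟨γ, hγ, ?_⟩
        rw [(IH γ hγ (le_of_lt (lt_of_lt_of_le hγ hβα))).1]
        exact hOg
    refine ⟨houteq, ?_, ?_⟩
    · rw [hinl]
      exact good_limit hδ0 hc.finSupp hmono'
        (fun γ hγ => (IH γ hγ (le_of_lt (lt_of_lt_of_le hγ hβα))).2.1)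
    · intro M hM
      rw [hinl]
      rintro x ⟨γ, hγ, hx⟩
      exact (IH γ hγ (le_of_lt (lt_of_lt_of_le hγ hβα))).2.2 M hM hx

theorem gconstr_result (hc : Constructible J) {α : Ordinal} {f : Ordinal → (A → Lab)}
    (hg : GConstr J α f) :
    GroundComplete J (f α) ∧ ∀ M, GroundComplete J M → inL (f α) ⊆ inL M := by
  obtain ⟨hO, hGood, hC⟩ := gconstr_inv hc hg α le_rfl
  have hfα : f α = Lam J (inL (f α)) := eq_lam_of hO
  refine ⟨⟨?_, hg.done⟩, hC⟩
  rw [hfα]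
  exact good_admissible hGood

theorem good_outL {I : Set A} (hg : Good J I) :
    outL (Lam J I) = {a | OutCl J I a} := by
  ext a
  constructor
  · intro h
    exact (lam_out.mp h).1
  · intro h
    exact lam_out.mpr ⟨h, fun hI => hg.2.1 a hI h⟩

open Classical in
/-- One step of the grounded construction on IN-sets. -/
noncomputable def nxt (J : JSB A) (I : Set A) : Set A :=
  if h : ∃ X, ForcedIn J (Lam J I) X ∧ Lam J I X ≠ Lab.IN then
    I ∪ {Classical.choose h} ∪ Dset J (Lam J I) (Classical.choose h)
  else I

theorem self_subset_nxt {I : Set A} : I ⊆ nxt J I := by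
  unfold nxt
  split
  · exact fun x hx => Or.inl (Or.inl hx)
  · exact subset_rfl

/-- The transfinite iteration of IN-sets. -/
noncomputable def Iset (J : JSB A) : Ordinal → Set A := fun o =>
  Ordinal.limitRecOn o {x | Strict J x} (fun _ IH => nxt J IH)
    (fun o _ IH => {a | ∃ β, ∃ h : β < o, a ∈ IH β h})

theorem Iset_zero : Iset J 0 = {x | Strict J x} :=
  Ordinal.limitRecOn_zero _ _ _

theorem Iset_succ (o : Ordinal) : Iset J (o + 1) = nxt J (Iset J o) := by
  rw [Iset, Ordinal.add_one_eq_succ, Ordinal.limitRecOn_succ]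
  rfl

theorem Iset_limit {o : Ordinal} (h : Order.IsSuccLimit o) :
    Iset J o = {a | ∃ β < o, a ∈ Iset J β} := by
  rw [Iset, Ordinal.limitRecOn_limit _ _ _ _ h]
  ext a
  simp only [Set.mem_setOf_eq, exists_prop]
  rfl

theorem Iset_mono : ∀ γ : Ordinal, ∀ β ≤ γ, Iset J β ⊆ Iset J γ := by
  intro γ
  induction γ using Ordinal.induction with
  | _ γ IH =>
  intro β hβγ
  rcases eq_or_lt_of_le hβγ with rfl | hβ
  · exact subset_rfl
  rcases Ordinal.zero_or_succ_or_isSuccLimit γ with h0 | ⟨σ, hσ⟩ | hlim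
  · subst h0; exact absurd hβ (not_lt_of_ge (zero_le (a := β)))
  · subst hσ
    rw [← Ordinal.add_one_eq_succ, Iset_succ]
    exact (IH σ (Order.lt_succ σ) β (Order.lt_succ_iff.mp hβ)).trans self_subset_nxt
  · rw [Iset_limit hlim]
    exact fun x hx => ⟨β, hβ, hx⟩

theorem good_Iset (hc : Constructible J) : ∀ o : Ordinal, Good J (Iset J o) := by
  intro o
  induction o using Ordinal.induction with
  | _ o IH =>
  rcases Ordinal.zero_or_succ_or_isSuccLimit o with h0 | ⟨σ, hσ⟩ | hlim
  · subst h0; rw [Iset_zero]; exact good_zero hc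
  · subst hσ
    rw [← Ordinal.add_one_eq_succ, Iset_succ]
    unfold nxt
    split
    · next h =>
      have hs := Classical.choose_spec h
      exact good_step (IH σ (Order.lt_succ σ)) hs.1
        (fun hI => hs.2 (lam_in.mpr hI))
    · exact IH σ (Order.lt_succ σ)
  · rw [Iset_limit hlim]
    exact good_limit hlim.pos hc.finSupp
      (fun β γ h1 h2 => Iset_mono γ β h1) (fun β hβ => IH β hβ)

theorem exists_stall :
    ∃ o : Ordinal.{0}, ∀ X, ForcedIn J (Lam J (Iset J o)) X →
      Lam J (Iset J o) X = Lab.IN := by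
  classical
  by_contra hno
  push_neg at hno
  have hne : ∀ o : Ordinal.{0}, ∃ X, ForcedIn J (Lam J (Iset J o)) X ∧
      Lam J (Iset J o) X ≠ Lab.IN := hno
  have hstep : ∀ o : Ordinal.{0}, ∃ X, X ∈ Iset J (o+1) ∧ X ∉ Iset J o := by
    intro o
    have h := hne o
    refine ⟨Classical.choose h, ?_, ?_⟩
    · rw [Iset_succ]
      unfold nxt
      rw [dif_pos h]
      exact Or.inl (Or.inr rfl)
    · intro hI
      exact (Classical.choose_spec h).2 (lam_in.mpr hI)
  have hinj : Function.Injective (Iset J : Ordinal.{0} → Set A) := by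
    have key : ∀ β γ : Ordinal.{0}, β < γ → Iset J β ≠ Iset J γ := by
      intro β γ hlt heq
      obtain ⟨X, hX1, hX2⟩ := hstep β
      have hXγ : X ∈ Iset J γ := Iset_mono γ (β+1)
        (by rw [Ordinal.add_one_eq_succ]; exact Order.succ_le_of_lt hlt) hX1
      rw [← heq] at hXγ
      exact hX2 hXγ
    intro β γ h
    rcases lt_trichotomy β γ with hl | he | hl
    · exact absurd h (key β γ hl)
    · exact he
    · exact absurd h.symm (key γ β hl)
  have : Small.{0} Ordinal.{0} := small_of_injective hinj
  exact not_small_ordinal.{0,0} this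

theorem exists_gconstr (hc : Constructible J) :
    ∃ α : Ordinal.{0}, GConstr J α (fun o => Lam J (Iset J o)) := by
  classical
  obtain ⟨o₀, ho₀⟩ := exists_stall (J := J)
  set St := {o : Ordinal.{0} |
    ∀ X, ForcedIn J (Lam J (Iset J o)) X → Lam J (Iset J o) X = Lab.IN} with hSt
  have hneSt : St.Nonempty := ⟨o₀, ho₀⟩
  have hαSt : sInf St ∈ St := csInf_mem hneSt
  have hlt : ∀ β < sInf St, β ∉ St :=
    fun β hβ => notMem_of_lt_csInf hβ (OrderBot.bddBelow St)
  refine ⟨sInf St, ?_, ?_, ?_, ?_⟩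
  · show Lam J (Iset J 0) = SIM J
    rw [Iset_zero, ← SIM_eq_lam]
  · intro β hβ
    have h : ∃ X, ForcedIn J (Lam J (Iset J β)) X ∧ Lam J (Iset J β) X ≠ Lab.IN := by
      by_contra hno
      refine hlt β hβ (fun X hX => ?_)
      by_contra hQ
      exact hno ⟨X, hX, hQ⟩
    have hXs := Classical.choose_spec h
    have hIs : Iset J (β+1) = Iset J β ∪ {Classical.choose h} ∪
        Dset J (Lam J (Iset J β)) (Classical.choose h) := by
      rw [Iset_succ]
      unfold nxt
      rw [dif_pos h]
    refine ⟨Classical.choose h, hXs.1, hXs.2, ?_, ?_⟩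
    · show inL (Lam J (Iset J (β+1))) = inL (Lam J (Iset J β)) ∪ {Classical.choose h} ∪
        {c | ∃ S B, Safe J (Lam J (Iset J β)) S B (Classical.choose h) ∧ (c = B ∨ c ∈ SC J B)}
      rw [inL_lam, inL_lam, hIs]
      rfl
    · show outL (Lam J (Iset J (β+1))) =
        {a | OutCl J (inL (Lam J (Iset J (β+1)))) a}
      rw [good_outL (good_Iset hc (β+1)), inL_lam]
  · intro δ hδα hlim
    constructor
    · show inL (Lam J (Iset J δ)) = {a | ∃ β < δ, a ∈ inL (Lam J (Iset J β))}
      rw [inL_lam, Iset_limit hlim]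
      simp only [inL_lam]
    · show outL (Lam J (Iset J δ)) = {a | ∃ β < δ, a ∈ outL (Lam J (Iset J β))}
      rw [good_outL (good_Iset hc δ)]
      ext a
      simp only [Set.mem_setOf_eq]
      constructor
      · intro h
        rw [Iset_limit hlim] at h
        obtain ⟨β, hβ, hO⟩ :=
          (outcl_limit hlim.pos hc.finSupp (fun β γ h1 _ => Iset_mono γ β h1)).mp h
        exact ⟨β, hβ, by rw [good_outL (good_Iset hc β)]; exact hO⟩
      · rintro ⟨β, hβ, hO⟩
        rw [good_outL (good_Iset hc β)] at hO
        rw [Iset_limit hlim]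
        exact (outcl_limit hlim.pos hc.finSupp
          (fun β γ h1 _ => Iset_mono γ β h1)).mpr ⟨β, hβ, hO⟩
  · intro X hX
    exact hαSt X hX

end AUX

end G

open G in
/-- In a JSBAF without preferences satisfying the Deductive ASPIC⊖
constructibility conditions, the grounded labeling exists and is unique: there is exactly one
ground-complete labeling whose IN-set is ⊆-minimal among ground-complete labelings; moreover,
the result of every grounded construction equals this labeling. -/
theorem grounded_exists_unique {A : Type} (J : JSB A) (hc : Constructible J) :
    ∃ L : A → Lab,
      (GroundComplete J L ∧
        ∀ L' : A → Lab, GroundComplete J L' → ¬ (inL L' ⊂ inL L)) ∧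
      (∀ L' : A → Lab,
        (GroundComplete J L' ∧ ∀ L'' : A → Lab, GroundComplete J L'' → ¬ (inL L'' ⊂ inL L')) →
        L' = L) ∧
      (∀ (α : Ordinal) (f : Ordinal → (A → Lab)), GConstr J α f → f α = L) := by
  classical
  obtain ⟨α₀, hG₀⟩ := exists_gconstr hc
  have hres := gconstr_result hc hG₀
  refine ⟨(fun o => Lam J (Iset J o)) α₀, ⟨hres.1, ?_⟩, ?_, ?_⟩
  · intro L' hL' hss
    exact hss.2 (hres.2 L' hL')
  · rintro L' ⟨hgc', hmin'⟩
    have h1 : inL ((fun o => Lam J (Iset J o)) α₀) ⊆ inL L' := hres.2 L' hgc'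
    have heq : inL L' = inL ((fun o => Lam J (Iset J o)) α₀) := by
      by_contra hne
      exact hmin' _ hres.1 (Set.ssubset_iff_subset_ne.mpr ⟨h1, fun h => hne h.symm⟩)
    exact adm_ext hgc'.1 hres.1.1 heq
  · intro α f hGf
    have hres' := gconstr_result hc hGf
    have h1 : inL (f α) ⊆ inL ((fun o => Lam J (Iset J o)) α₀) := hres'.2 _ hres.1
    have h2 : inL ((fun o => Lam J (Iset J o)) α₀) ⊆ inL (f α) := hres.2 _ hres'.1
    exact adm_ext hres'.1.1 hres.1.1 (Set.Subset.antisymm h1 h2)
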